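/- Gradient of the smoothed robust objective: suppose Θ ⊆ ℝ^N is open and for all s, a the map θ ↦ π_θ(a|s) is differentiable on Θ. Then for every σ > 0 and every probability distribution ρ on S, J_{σ,ρ} is differentiable on Θ and ∇J_{σ,ρ}(θ) = B(ρ,θ) + γR·(Σ_{s∈S} e^{σ·V_σ^{π_θ}(s)}·B(s,θ)) / ((1−γ)·Σ_{s∈S} e^{σ·V_σ^{π_θ}(s)}). -/

import Mathlib

set_option autoImplicit false
set_option maxHeartbeats 1000000

open Finset

/-- Log-sum-exp: `LSE(σ, V) = (1/σ)·log (∑ s, exp (σ · V s))`. -/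
noncomputable def lse {S : Type*} [Fintype S] (σ : ℝ) (V : S → ℝ) : ℝ :=
  (1 / σ) * Real.log (∑ s, Real.exp (σ * V s))

/-- The stochastic matrix of a policy `π` under the kernel `p`:
`P_π(s,s') = ∑ a, π(a|s)·p(s'|s,a)`. -/
noncomputable def pmat {S A : Type*} [Fintype A] (π : S → A → ℝ) (p : S → A → S → ℝ) :
    Matrix S S ℝ :=
  Matrix.of fun s s' => ∑ a, π s a * p s a s'

/-- The discounted visitation distribution
`d^π_s(s') = (1-γ+γR)·∑_{t≥0} (γ(1-R))^t·(P_π^t)(s,s')`. -/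
noncomputable def dvisit {S A : Type*} [Fintype S] [Fintype A] [DecidableEq S]
    (γ R : ℝ) (π : S → A → ℝ) (p : S → A → S → ℝ) (s s' : S) : ℝ :=
  (1 - γ + γ * R) * ∑' t : ℕ, (γ * (1 - R)) ^ t * ((pmat π p) ^ t) s s'

section Helpers

open Asymptotics Topology Filter

lemma lse_le_add {S : Type*} [Fintype S] [Nonempty S] {σ : ℝ} (hσ : 0 < σ)
    {V W : S → ℝ} {d : ℝ} (h : ∀ s, V s ≤ W s + d) : lse σ V ≤ lse σ W + d := by
  have hpos : (0:ℝ) < ∑ s, Real.exp (σ * W s) :=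
    Finset.sum_pos (fun s _ => Real.exp_pos _) univ_nonempty
  have hle : ∑ s, Real.exp (σ * V s) ≤ Real.exp (σ * d) * ∑ s, Real.exp (σ * W s) := by
    rw [Finset.mul_sum]
    refine Finset.sum_le_sum fun s _ => ?_
    rw [← Real.exp_add]
    exact Real.exp_le_exp.2 (by nlinarith [h s])
  have hlog : Real.log (∑ s, Real.exp (σ * V s)) ≤ σ * d + Real.log (∑ s, Real.exp (σ * W s)) := by
    calc Real.log (∑ s, Real.exp (σ * V s)) ≤
        Real.log (Real.exp (σ * d) * ∑ s, Real.exp (σ * W s)) :=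
          Real.log_le_log (Finset.sum_pos (fun s _ => Real.exp_pos _) univ_nonempty) hle
      _ = σ * d + Real.log (∑ s, Real.exp (σ * W s)) := by
          rw [Real.log_mul (Real.exp_ne_zero _) (ne_of_gt hpos), Real.log_exp]
  unfold lse
  have := mul_le_mul_of_nonneg_left hlog (le_of_lt (one_div_pos.2 hσ))
  calc (1/σ) * Real.log (∑ s, Real.exp (σ * V s))
      ≤ (1/σ) * (σ * d + Real.log (∑ s, Real.exp (σ * W s))) := this
    _ = (1/σ) * Real.log (∑ s, Real.exp (σ * W s)) + d := by field_simp; ring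

lemma abs_lse_sub_le {S : Type*} [Fintype S] [Nonempty S] {σ : ℝ} (hσ : 0 < σ)
    {V W : S → ℝ} {d : ℝ} (h : ∀ s, |V s - W s| ≤ d) : |lse σ V - lse σ W| ≤ d := by
  rw [abs_le]
  constructor
  · have := lse_le_add hσ (V := W) (W := V) (d := d) (fun s => by
      have := abs_le.1 (h s); linarith [this.1])
    linarith
  · have := lse_le_add hσ (V := V) (W := W) (d := d) (fun s => by
      have := abs_le.1 (h s); linarith [this.2])
    linarith

lemma stoch_pow {S : Type*} [Fintype S] [DecidableEq S] {P : Matrix S S ℝ}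
    (h0 : ∀ s s', 0 ≤ P s s') (h1 : ∀ s, ∑ s', P s s' = 1) (t : ℕ) :
    (∀ s s', 0 ≤ (P ^ t) s s') ∧ (∀ s, ∑ s', (P ^ t) s s' = 1) := by
  induction t with
  | zero =>
    constructor
    · intro s s'; simp [Matrix.one_apply]; split <;> norm_num
    · intro s; simp [Matrix.one_apply]
  | succ n ih =>
    have hmul : ∀ s s', (P ^ (n+1)) s s' = ∑ x, (P ^ n) s x * P x s' := by
      intro s s'; rw [pow_succ, Matrix.mul_apply]
    constructor
    · intro s s'; rw [hmul]
      exact Finset.sum_nonneg fun x _ => mul_nonneg (ih.1 s x) (h0 x s')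
    · intro s
      simp only [hmul]
      rw [Finset.sum_comm]
      calc ∑ x, ∑ s', (P ^ n) s x * P x s' = ∑ x, (P ^ n) s x * ∑ s', P x s' := by
            simp [Finset.mul_sum]
        _ = 1 := by simp [h1, ih.2 s]

lemma pow_entry_le_one {S : Type*} [Fintype S] [DecidableEq S] {P : Matrix S S ℝ}
    (h0 : ∀ s s', 0 ≤ P s s') (h1 : ∀ s, ∑ s', P s s' = 1) (t : ℕ) (s s' : S) :
    (P ^ t) s s' ≤ 1 := by
  have h := stoch_pow h0 h1 t
  calc (P ^ t) s s' ≤ ∑ x, (P ^ t) s x :=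
        Finset.single_le_sum (fun x _ => h.1 s x) (Finset.mem_univ s')
    _ = 1 := h.2 s

lemma geom_mat_summable {S : Type*} [Fintype S] [DecidableEq S] {P : Matrix S S ℝ} {β : ℝ}
    (hβ0 : 0 ≤ β) (hβ1 : β < 1)
    (h0 : ∀ s s', 0 ≤ P s s') (h1 : ∀ s, ∑ s', P s s' = 1) (s s' : S) :
    Summable (fun t : ℕ => β ^ t * (P ^ t) s s') := by
  refine Summable.of_nonneg_of_le
    (fun t => mul_nonneg (pow_nonneg hβ0 t) ((stoch_pow h0 h1 t).1 s s'))
    (fun t => ?_) (summable_geometric_of_lt_one hβ0 hβ1)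
  calc β ^ t * (P ^ t) s s' ≤ β ^ t * 1 :=
        mul_le_mul_of_nonneg_left (pow_entry_le_one h0 h1 t s s') (pow_nonneg hβ0 t)
    _ = β ^ t := mul_one _

lemma geom_mat_rec {S : Type*} [Fintype S] [DecidableEq S] {P : Matrix S S ℝ} {β : ℝ}
    (hβ0 : 0 ≤ β) (hβ1 : β < 1)
    (h0 : ∀ s s', 0 ≤ P s s') (h1 : ∀ s, ∑ s', P s s' = 1) (s s' : S) :
    (∑' t : ℕ, β ^ t * (P ^ t) s s') =
      (if s = s' then 1 else 0) + β * ∑ x, P s x * ∑' t : ℕ, β ^ t * (P ^ t) x s' := by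
  rw [Summable.tsum_eq_zero_add (geom_mat_summable hβ0 hβ1 h0 h1 s s')]
  congr 1
  · simp [Matrix.one_apply]
  · have hentry : ∀ t : ℕ, β ^ (t+1) * (P ^ (t+1)) s s'
        = ∑ x, P s x * (β * (β ^ t * (P ^ t) x s')) := by
      intro t
      rw [pow_succ' P t, Matrix.mul_apply, Finset.mul_sum]
      refine Finset.sum_congr rfl fun x _ => by ring
    calc (∑' t : ℕ, β ^ (t+1) * (P ^ (t+1)) s s')
        = ∑' t : ℕ, ∑ x, P s x * (β * (β ^ t * (P ^ t) x s')) := tsum_congr hentry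
      _ = ∑ x, ∑' t : ℕ, P s x * (β * (β ^ t * (P ^ t) x s')) := by
          refine Summable.tsum_finsetSum fun x _ => ?_
          exact ((geom_mat_summable hβ0 hβ1 h0 h1 x s').mul_left β).mul_left (P s x)
      _ = β * ∑ x, P s x * ∑' t : ℕ, β ^ t * (P ^ t) x s' := by
          rw [Finset.mul_sum]
          refine Finset.sum_congr rfl fun x _ => ?_
          rw [tsum_mul_left, tsum_mul_left]; ring

lemma sq_norm_isLittleO {E : Type*} [NormedAddCommGroup E] (θ : E) :
    (fun θ' : E => ‖θ' - θ‖ * ‖θ' - θ‖) =o[𝓝 θ] (fun θ' => θ' - θ) := by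
  rw [isLittleO_iff]
  intro c hc
  have hev : ∀ᶠ θ' in 𝓝 θ, ‖θ' - θ‖ ≤ c := by
    have h0 : Tendsto (fun θ' : E => θ' - θ) (𝓝 θ) (𝓝 0) := by
      have := (continuous_id.sub (continuous_const (y := θ))).tendsto θ
      exact tendsto_sub_nhds_zero_iff.2 tendsto_id
    exact h0.norm.eventually_le_const (by simpa using hc)
  filter_upwards [hev] with θ' h
  have h1 : ‖θ' - θ‖ * ‖θ' - θ‖ ≤ c * ‖θ' - θ‖ :=
    mul_le_mul_of_nonneg_right h (norm_nonneg _)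
  simpa [Real.norm_eq_abs, abs_mul, abs_of_nonneg (norm_nonneg (θ' - θ))] using h1

lemma bigO_mul_bigO_isLittleO {E : Type*} [NormedAddCommGroup E] {θ : E} {f k : E → ℝ}
    (hf : f =O[𝓝 θ] fun θ' => θ' - θ) (hk : k =O[𝓝 θ] fun θ' => θ' - θ) :
    (fun θ' => f θ' * k θ') =o[𝓝 θ] (fun θ' => θ' - θ) :=
  (hf.norm_right.mul hk.norm_right).trans_isLittleO (sq_norm_isLittleO θ)

lemma lse_hasFDerivAt {S : Type*} [Fintype S] [Nonempty S] [DecidableEq S] {σ : ℝ} (hσ : 0 < σ)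
    (V0 : S → ℝ) :
    HasFDerivAt (lse σ)
      (∑ s, (Real.exp (σ * V0 s) / ∑ s', Real.exp (σ * V0 s')) •
        (ContinuousLinearMap.proj s : (S → ℝ) →L[ℝ] ℝ)) V0 := by
  have hZ : (0:ℝ) < ∑ s', Real.exp (σ * V0 s') :=
    Finset.sum_pos (fun s _ => Real.exp_pos _) univ_nonempty
  have hsum : HasFDerivAt (fun V : S → ℝ => ∑ s, Real.exp (σ * V s))
      (∑ s, (σ * Real.exp (σ * V0 s)) • (ContinuousLinearMap.proj s : (S → ℝ) →L[ℝ] ℝ)) V0 := by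
    refine HasFDerivAt.fun_sum fun s _ => ?_
    have hproj : HasFDerivAt (fun V : S → ℝ => V s)
        (ContinuousLinearMap.proj s : (S → ℝ) →L[ℝ] ℝ) V0 :=
      (ContinuousLinearMap.proj s : (S → ℝ) →L[ℝ] ℝ).hasFDerivAt
    have hlin : HasFDerivAt (fun V : S → ℝ => σ * V s)
        (σ • (ContinuousLinearMap.proj s : (S → ℝ) →L[ℝ] ℝ)) V0 := hproj.const_mul σ
    have := (Real.hasDerivAt_exp (σ * V0 s)).comp_hasFDerivAt V0 hlin
    refine this.congr_fderiv (Eq.symm ?_)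
    rw [smul_smul]; ring_nf
  have hlog := hsum.log (ne_of_gt hZ)
  have := hlog.const_mul (1 / σ)
  refine this.congr_fderiv (Eq.symm ?_)
  rw [smul_smul, Finset.smul_sum]
  refine Finset.sum_congr rfl fun s _ => ?_
  rw [smul_smul]
  congr 1
  field_simp

end Helpers

open Asymptotics Topology Filter RealInnerProductSpace

/-- **Gradient of the smoothed robust objective (Theorem 4)**: for a differentiable policy
class on an open `Θ ⊆ ℝ^N`, every `σ > 0` and every distribution `ρ` on `S`, the smoothed
objective `J_{σ,ρ}(θ) = ∑_s ρ(s)·V_σ^{π_θ}(s)` is differentiable on `Θ` with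
`∇J_{σ,ρ}(θ) = B(ρ,θ) + γR·(∑_s e^{σV_σ(s)}·B(s,θ))/((1-γ)·∑_s e^{σV_σ(s)})`, where
`B(s,θ) = (1/(1-γ+γR))·∑_{s'} d^{π_θ}_s(s')·∑_a ∇π_θ(a|s')·Q_σ^{π_θ}(s',a)` and
`B(ρ,θ) = ∑_s ρ(s)·B(s,θ)`. -/
theorem stmt_12 {S A : Type*} [Fintype S] [Fintype A] [Nonempty S] [Nonempty A] [DecidableEq S]
    {N : ℕ}
    (c : S → A → ℝ) (hc : ∀ s a, c s a ∈ Set.Icc (0 : ℝ) 1)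
    (γ : ℝ) (hγ : γ ∈ Set.Ico (0 : ℝ) 1)
    (R : ℝ) (hR : R ∈ Set.Icc (0 : ℝ) 1)
    (p : S → A → S → ℝ) (hp : ∀ s a, p s a ∈ stdSimplex ℝ S)
    (σ : ℝ) (hσ : 0 < σ)
    (Θ : Set (EuclideanSpace ℝ (Fin N))) (hΘo : IsOpen Θ)
    (π : EuclideanSpace ℝ (Fin N) → S → A → ℝ)
    (hπ : ∀ θ ∈ Θ, ∀ s, π θ s ∈ stdSimplex ℝ A)
    (D : EuclideanSpace ℝ (Fin N) → S → A → EuclideanSpace ℝ (Fin N))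
    (hD : ∀ θ ∈ Θ, ∀ s a, HasGradientAt (fun θ' => π θ' s a) (D θ s a) θ)
    (Vσ : EuclideanSpace ℝ (Fin N) → S → ℝ)
    (hVσ : ∀ θ ∈ Θ, ∀ s, Vσ θ s = ∑ a, π θ s a * (c s a
      + γ * (1 - R) * ∑ s', p s a s' * Vσ θ s'
      + γ * R * lse σ (Vσ θ)))
    (Qσ : EuclideanSpace ℝ (Fin N) → S → A → ℝ)
    (hQσ : ∀ θ ∈ Θ, ∀ s a, Qσ θ s a = c s a + γ * (1 - R) * ∑ s', p s a s' * Vσ θ s'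
      + γ * R * lse σ (Vσ θ))
    (B : S → EuclideanSpace ℝ (Fin N) → EuclideanSpace ℝ (Fin N))
    (hB : ∀ s θ, B s θ = (1 / (1 - γ + γ * R)) •
      ∑ s', ∑ a, (dvisit γ R (π θ) p s s' * Qσ θ s' a) • D θ s' a)
    (ρ : S → ℝ) (hρ : ρ ∈ stdSimplex ℝ S)
    (θ : EuclideanSpace ℝ (Fin N)) (hθ : θ ∈ Θ) :
    HasGradientAt (fun θ' => ∑ s, ρ s * Vσ θ' s)
      ((∑ s, ρ s • B s θ) + (γ * R / ((1 - γ) * ∑ s, Real.exp (σ * Vσ θ s))) •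
        ∑ s, Real.exp (σ * Vσ θ s) • B s θ) θ := by
  obtain ⟨hγ0, hγ1⟩ := hγ
  obtain ⟨hR0, hR1⟩ := hR
  have h1γ : (0:ℝ) < 1 - γ := by linarith
  set β : ℝ := γ * (1 - R) with hβdef
  have hβ0 : 0 ≤ β := mul_nonneg hγ0 (by linarith)
  have hβγ : β ≤ γ := by nlinarith
  have hβ1 : β < 1 := lt_of_le_of_lt hβγ hγ1
  have h1β : (0:ℝ) < 1 - β := by linarith
  set P : Matrix S S ℝ := pmat (π θ) p with hPdef
  have hPapp : ∀ s s', P s s' = ∑ a, π θ s a * p s a s' := fun s s' => rfl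
  have hP0 : ∀ s s', 0 ≤ P s s' := fun s s' =>
    Finset.sum_nonneg fun a _ => mul_nonneg ((hπ θ hθ s).1 a) ((hp s a).1 s')
  have hProw : ∀ s, ∑ s', P s s' = 1 := by
    intro s
    calc ∑ s', P s s' = ∑ s', ∑ a, π θ s a * p s a s' :=
          Finset.sum_congr rfl fun s' _ => hPapp s s'
      _ = ∑ a, π θ s a * ∑ s', p s a s' := by
          rw [Finset.sum_comm]; simp [Finset.mul_sum]
      _ = 1 := by
          have : ∀ a, π θ s a * (∑ s', p s a s') = π θ s a := fun a => by
            rw [(hp s a).2, mul_one]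
          rw [Finset.sum_congr rfl fun a _ => this a, (hπ θ hθ s).2]
  set Z : ℝ := ∑ s, Real.exp (σ * Vσ θ s) with hZdef
  have hZ : 0 < Z := Finset.sum_pos (fun s _ => Real.exp_pos _) univ_nonempty
  set w : S → ℝ := fun s => Real.exp (σ * Vσ θ s) / Z with hwdef
  have hw0 : ∀ s, 0 ≤ w s := fun s => div_nonneg (Real.exp_pos _).le hZ.le
  have hwsum : ∑ s, w s = 1 := by
    rw [hwdef, ← Finset.sum_div, ← hZdef, div_self hZ.ne']
  set g : S → EuclideanSpace ℝ (Fin N) := fun s' => ∑ a, Qσ θ s' a • D θ s' a with hgdef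
  set W : EuclideanSpace ℝ (Fin N) := ∑ s', Real.exp (σ * Vσ θ s') • B s' θ with hWdef
  set κ : ℝ := γ * R / ((1 - γ) * Z) with hκdef
  set G : S → EuclideanSpace ℝ (Fin N) := fun s => B s θ + κ • W with hGdef
  -- value as policy-weighted Q
  have hVQ : ∀ θ' ∈ Θ, ∀ s, Vσ θ' s = ∑ a, π θ' s a * Qσ θ' s a := by
    intro θ' hθ' s
    rw [hVσ θ' hθ' s]
    exact Finset.sum_congr rfl fun a _ => by rw [hQσ θ' hθ' s a]
  -- B recursion
  set Tt : S → S → ℝ := fun x s' => ∑' t : ℕ, β ^ t * (P ^ t) x s' with hTt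
  have hdv : ∀ s s', dvisit γ R (π θ) p s s' = (1 - β) * Tt s s' := by
    intro s s'
    have hco : (1:ℝ) - γ + γ * R = 1 - β := by rw [hβdef]; ring
    show (1 - γ + γ * R) * ∑' t : ℕ, β ^ t * (P ^ t) s s' = (1 - β) * Tt s s'
    rw [hco]
  have hBalt : ∀ s, B s θ = ∑ s', Tt s s' • g s' := by
    intro s
    rw [hB s θ]
    have hterm : ∀ s', ∑ a, (dvisit γ R (π θ) p s s' * Qσ θ s' a) • D θ s' a
        = ((1 - β) * Tt s s') • g s' := by
      intro s'
      rw [hdv s s', hgdef]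
      rw [Finset.smul_sum]
      exact Finset.sum_congr rfl fun a _ => by rw [smul_smul]
    rw [Finset.sum_congr rfl fun s' _ => hterm s']
    rw [Finset.smul_sum]
    have h1 : (1:ℝ) - γ + γ * R = 1 - β := by rw [hβdef]; ring
    refine Finset.sum_congr rfl fun s' _ => ?_
    rw [smul_smul, h1]
    congr 1
    field_simp
  have hBrec : ∀ s, B s θ = g s + β • ∑ s', P s s' • B s' θ := by
    intro s
    have hrec : ∀ x s', Tt x s' = (if x = s' then 1 else 0) + β * ∑ y, P x y * Tt y s' :=
      fun x s' => geom_mat_rec hβ0 hβ1 hP0 hProw x s'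
    calc B s θ = ∑ s', Tt s s' • g s' := hBalt s
      _ = ∑ s', ((if s = s' then 1 else 0) + β * ∑ y, P s y * Tt y s') • g s' :=
          Finset.sum_congr rfl fun s' _ => by rw [← hrec s s']
      _ = (∑ s', (if s = s' then (1:ℝ) else 0) • g s')
          + ∑ s', (β * ∑ y, P s y * Tt y s') • g s' := by
          rw [← Finset.sum_add_distrib]
          exact Finset.sum_congr rfl fun s' _ => add_smul _ _ _
      _ = g s + β • ∑ y, P s y • B y θ := by
          congr 1
          · simp
          · calc ∑ s', (β * ∑ y, P s y * Tt y s') • g s'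
                = ∑ s', ∑ y, (β * (P s y * Tt y s')) • g s' := by
                  refine Finset.sum_congr rfl fun s' _ => ?_
                  rw [Finset.mul_sum, Finset.sum_smul]
              _ = ∑ y, ∑ s', (β * (P s y * Tt y s')) • g s' := Finset.sum_comm
              _ = β • ∑ y, P s y • B y θ := by
                  rw [Finset.smul_sum]
                  refine Finset.sum_congr rfl fun y _ => ?_
                  rw [hBalt y, Finset.smul_sum, Finset.smul_sum]
                  refine Finset.sum_congr rfl fun s' _ => ?_
                  rw [smul_smul, smul_smul]
                  congr 1
                  ring
  have hwB : ∑ s', w s' • B s' θ = (1/Z) • W := by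
    rw [hWdef, Finset.smul_sum]
    refine Finset.sum_congr rfl fun s' _ => ?_
    rw [smul_smul, hwdef]
    congr 1
    field_simp
  have hGlin : ∀ s, G s = g s + β • (∑ s', P s s' • G s')
      + (γ * R) • (∑ s', w s' • G s') := by
    intro s
    have h1 : ∑ s', P s s' • G s' = (∑ s', P s s' • B s' θ) + κ • W := by
      rw [hGdef]
      simp only [smul_add]
      rw [Finset.sum_add_distrib]
      congr 1
      rw [← Finset.sum_smul, hProw s, one_smul]
    have h2 : ∑ s', w s' • G s' = (1/Z) • W + κ • W := by
      rw [hGdef]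
      simp only [smul_add]
      rw [Finset.sum_add_distrib, hwB]
      congr 1
      rw [← Finset.sum_smul, hwsum, one_smul]
    rw [h1, h2]
    show B s θ + κ • W = _
    rw [hBrec s]
    have hκeq : κ = β * κ + (γ * R * (1/Z) + γ * R * κ) := by
      rw [hκdef, hβdef]
      field_simp
      ring
    rw [smul_add, smul_add, smul_smul, smul_smul, smul_smul]
    nth_rewrite 1 [hκeq]
    rw [add_smul, add_smul]
    abel
  -- asymptotics
  set CQ : ℝ := ∑ s, ∑ a, |Qσ θ s a| with hCQdef
  have hCQle : ∀ s a, |Qσ θ s a| ≤ CQ := by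
    intro s a
    calc |Qσ θ s a| ≤ ∑ a', |Qσ θ s a'| :=
          Finset.single_le_sum (f := fun a' => |Qσ θ s a'|)
            (fun a' _ => abs_nonneg _) (Finset.mem_univ a)
      _ ≤ CQ := Finset.single_le_sum
          (f := fun s' => ∑ a', |Qσ θ s' a'|)
          (fun s' _ => Finset.sum_nonneg fun a' _ => abs_nonneg _) (Finset.mem_univ s)
  have hCQ0 : 0 ≤ CQ := le_trans (abs_nonneg _) (hCQle (Classical.arbitrary S) (Classical.arbitrary A))
  set Sπ : EuclideanSpace ℝ (Fin N) → ℝ := fun θ' => ∑ s, ∑ a, |π θ' s a - π θ s a| with hSπdef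
  have hSπ0 : ∀ θ', 0 ≤ Sπ θ' := fun θ' =>
    Finset.sum_nonneg fun s _ => Finset.sum_nonneg fun a _ => abs_nonneg _
  have hSπa : ∀ θ' s a, |π θ' s a - π θ s a| ≤ Sπ θ' := by
    intro θ' s a
    calc |π θ' s a - π θ s a| ≤ ∑ a', |π θ' s a' - π θ s a'| :=
          Finset.single_le_sum (f := fun a' => |π θ' s a' - π θ s a'|)
            (fun a' _ => abs_nonneg _) (Finset.mem_univ a)
      _ ≤ Sπ θ' := Finset.single_le_sum
          (f := fun s' => ∑ a', |π θ' s' a' - π θ s' a'|)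
          (fun s' _ => Finset.sum_nonneg fun a' _ => abs_nonneg _) (Finset.mem_univ s)
  have hoπ : ∀ s a, (fun θ' => π θ' s a - π θ s a - ⟪D θ s a, θ' - θ⟫)
      =o[𝓝 θ] (fun θ' => θ' - θ) := by
    intro s a
    have h := (hD θ hθ s a).hasFDerivAt.isLittleO
    simpa [InnerProductSpace.toDual_apply_apply] using h
  have hOπ : ∀ s a, (fun θ' => π θ' s a - π θ s a) =O[𝓝 θ] (fun θ' => θ' - θ) :=
    fun s a => HasFDerivAt.isBigO_sub (hD θ hθ s a).hasFDerivAt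
  have hOSπ : Sπ =O[𝓝 θ] (fun θ' => θ' - θ) := by
    refine IsBigO.fun_sum fun s _ => IsBigO.fun_sum fun a _ => ?_
    exact isBigO_norm_left.2 (hOπ s a)
  have hθΘ : ∀ᶠ θ' in 𝓝 θ, θ' ∈ Θ := hΘo.mem_nhds hθ
  have hVQbound : ∀ᶠ θ' in 𝓝 θ,
      (∀ s, |Vσ θ' s - Vσ θ s| ≤ (CQ / (1 - γ)) * Sπ θ') ∧
      (∀ s a, |Qσ θ' s a - Qσ θ s a| ≤ γ * ((CQ / (1 - γ)) * Sπ θ')) := by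
    filter_upwards [hθΘ] with θ' hθ'
    set M2 : ℝ := (univ : Finset S).sup' univ_nonempty (fun s => |Vσ θ' s - Vσ θ s|) with hM2def
    have hM2le : ∀ s, |Vσ θ' s - Vσ θ s| ≤ M2 := fun s => Finset.le_sup' (fun s => |Vσ θ' s - Vσ θ s|) (mem_univ s)
    have hΔQ : ∀ s a, |Qσ θ' s a - Qσ θ s a| ≤ γ * M2 := by
      intro s a
      rw [hQσ θ' hθ' s a, hQσ θ hθ s a]
      have h1 : |(∑ s'', p s a s'' * Vσ θ' s'') - ∑ s'', p s a s'' * Vσ θ s''| ≤ M2 := by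
        rw [← Finset.sum_sub_distrib]
        calc |∑ s'', (p s a s'' * Vσ θ' s'' - p s a s'' * Vσ θ s'')|
            ≤ ∑ s'', |p s a s'' * Vσ θ' s'' - p s a s'' * Vσ θ s''| :=
              Finset.abs_sum_le_sum_abs _ _
          _ = ∑ s'', p s a s'' * |Vσ θ' s'' - Vσ θ s''| := by
              refine Finset.sum_congr rfl fun s'' _ => ?_
              rw [← mul_sub, abs_mul, abs_of_nonneg ((hp s a).1 s'')]
          _ ≤ ∑ s'', p s a s'' * M2 := Finset.sum_le_sum fun s'' _ =>
              mul_le_mul_of_nonneg_left (hM2le s'') ((hp s a).1 s'')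
          _ = M2 := by rw [← Finset.sum_mul, (hp s a).2, one_mul]
      have h2 : |lse σ (Vσ θ') - lse σ (Vσ θ)| ≤ M2 := abs_lse_sub_le hσ (fun s'' => hM2le s'')
      have heq : (c s a + β * (∑ s'', p s a s'' * Vσ θ' s'') + γ * R * lse σ (Vσ θ'))
          - (c s a + β * (∑ s'', p s a s'' * Vσ θ s'') + γ * R * lse σ (Vσ θ))
          = β * ((∑ s'', p s a s'' * Vσ θ' s'') - ∑ s'', p s a s'' * Vσ θ s'')
            + γ * R * (lse σ (Vσ θ') - lse σ (Vσ θ)) := by ring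
      rw [heq]
      calc |β * ((∑ s'', p s a s'' * Vσ θ' s'') - ∑ s'', p s a s'' * Vσ θ s'')
            + γ * R * (lse σ (Vσ θ') - lse σ (Vσ θ))|
          ≤ |β * ((∑ s'', p s a s'' * Vσ θ' s'') - ∑ s'', p s a s'' * Vσ θ s'')|
            + |γ * R * (lse σ (Vσ θ') - lse σ (Vσ θ))| := abs_add_le _ _
        _ ≤ β * M2 + γ * R * M2 := by
            have hb1 : |β * ((∑ s'', p s a s'' * Vσ θ' s'') - ∑ s'', p s a s'' * Vσ θ s'')|
                ≤ β * M2 := by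
              rw [abs_mul, abs_of_nonneg hβ0]
              exact mul_le_mul_of_nonneg_left h1 hβ0
            have hb2 : |γ * R * (lse σ (Vσ θ') - lse σ (Vσ θ))| ≤ γ * R * M2 := by
              rw [abs_mul, abs_of_nonneg (mul_nonneg hγ0 hR0)]
              exact mul_le_mul_of_nonneg_left h2 (mul_nonneg hγ0 hR0)
            exact add_le_add hb1 hb2
        _ = γ * M2 := by rw [hβdef]; ring
    have hVs : ∀ s, |Vσ θ' s - Vσ θ s| ≤ CQ * Sπ θ' + γ * M2 := by
      intro s
      have hdecomp : Vσ θ' s - Vσ θ s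
          = (∑ a, (π θ' s a - π θ s a) * Qσ θ s a)
            + ∑ a, π θ' s a * (Qσ θ' s a - Qσ θ s a) := by
        rw [hVQ θ' hθ' s, hVQ θ hθ s, ← Finset.sum_add_distrib, ← Finset.sum_sub_distrib]
        exact Finset.sum_congr rfl fun a _ => by ring
      rw [hdecomp]
      calc |(∑ a, (π θ' s a - π θ s a) * Qσ θ s a)
            + ∑ a, π θ' s a * (Qσ θ' s a - Qσ θ s a)|
          ≤ |∑ a, (π θ' s a - π θ s a) * Qσ θ s a|
            + |∑ a, π θ' s a * (Qσ θ' s a - Qσ θ s a)| := abs_add_le _ _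
        _ ≤ (∑ a, |π θ' s a - π θ s a| * CQ) + ∑ a, π θ' s a * (γ * M2) := by
            gcongr ?_ + ?_
            · calc |∑ a, (π θ' s a - π θ s a) * Qσ θ s a|
                  ≤ ∑ a, |(π θ' s a - π θ s a) * Qσ θ s a| := Finset.abs_sum_le_sum_abs _ _
                _ ≤ ∑ a, |π θ' s a - π θ s a| * CQ := Finset.sum_le_sum fun a _ => by
                    rw [abs_mul]
                    exact mul_le_mul_of_nonneg_left (hCQle s a) (abs_nonneg _)
            · calc |∑ a, π θ' s a * (Qσ θ' s a - Qσ θ s a)|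
                  ≤ ∑ a, |π θ' s a * (Qσ θ' s a - Qσ θ s a)| := Finset.abs_sum_le_sum_abs _ _
                _ ≤ ∑ a, π θ' s a * (γ * M2) := Finset.sum_le_sum fun a _ => by
                    rw [abs_mul, abs_of_nonneg ((hπ θ' hθ' s).1 a)]
                    exact mul_le_mul_of_nonneg_left (hΔQ s a) ((hπ θ' hθ' s).1 a)
        _ ≤ CQ * Sπ θ' + γ * M2 := by
            rw [← Finset.sum_mul, ← Finset.sum_mul, (hπ θ' hθ' s).2, one_mul]
            have hle2 : ∑ a, |π θ' s a - π θ s a| ≤ Sπ θ' :=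
              Finset.single_le_sum
                (f := fun s' => ∑ a, |π θ' s' a - π θ s' a|)
                (fun s' _ => Finset.sum_nonneg fun a _ => abs_nonneg _) (Finset.mem_univ s)
            have := mul_le_mul_of_nonneg_right hle2 hCQ0
            nlinarith [this]
    have hM2bound : M2 ≤ (CQ / (1 - γ)) * Sπ θ' := by
      obtain ⟨s0, _, hs0⟩ := Finset.exists_mem_eq_sup'
        (univ_nonempty (α := S)) (fun s => |Vσ θ' s - Vσ θ s|)
      have h := hVs s0
      rw [← hs0] at h
      rw [div_mul_eq_mul_div, le_div_iff₀ h1γ]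
      nlinarith [h]
    constructor
    · exact fun s => le_trans (hM2le s) hM2bound
    · intro s a
      exact le_trans (hΔQ s a) (mul_le_mul_of_nonneg_left hM2bound hγ0)
  have hOV : ∀ s, (fun θ' => Vσ θ' s - Vσ θ s) =O[𝓝 θ] (fun θ' => θ' - θ) := by
    intro s
    refine IsBigO.trans ?_ hOSπ
    rw [isBigO_iff]
    refine ⟨CQ / (1 - γ), ?_⟩
    filter_upwards [hVQbound] with θ' h
    rw [Real.norm_eq_abs, Real.norm_eq_abs, abs_of_nonneg (hSπ0 θ')]
    exact h.1 s
  have hOQ : ∀ s a, (fun θ' => Qσ θ' s a - Qσ θ s a) =O[𝓝 θ] (fun θ' => θ' - θ) := by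
    intro s a
    refine IsBigO.trans ?_ hOSπ
    rw [isBigO_iff]
    refine ⟨γ * (CQ / (1 - γ)), ?_⟩
    filter_upwards [hVQbound] with θ' h
    rw [Real.norm_eq_abs, Real.norm_eq_abs, abs_of_nonneg (hSπ0 θ')]
    calc |Qσ θ' s a - Qσ θ s a| ≤ γ * ((CQ / (1 - γ)) * Sπ θ') := h.2 s a
      _ = γ * (CQ / (1 - γ)) * Sπ θ' := by ring
  have htend0 : Tendsto (fun θ' : EuclideanSpace ℝ (Fin N) => θ' - θ) (𝓝 θ) (𝓝 0) := by
    have := (continuous_id.sub (continuous_const (y := θ))).tendsto θ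
    exact tendsto_sub_nhds_zero_iff.2 tendsto_id
  have htendV : Tendsto (fun θ' => Vσ θ') (𝓝 θ) (𝓝 (Vσ θ)) := by
    rw [tendsto_pi_nhds]
    intro s
    have h0 : Tendsto (fun θ' => Vσ θ' s - Vσ θ s) (𝓝 θ) (𝓝 0) :=
      (hOV s).trans_tendsto htend0
    have := h0.add (tendsto_const_nhds (x := Vσ θ s))
    simpa using this
  have hA3 : (fun θ' => lse σ (Vσ θ') - lse σ (Vσ θ) - ∑ s', w s' * (Vσ θ' s' - Vσ θ s'))
      =o[𝓝 θ] (fun θ' => θ' - θ) := by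
    have hlse := lse_hasFDerivAt (S := S) hσ (Vσ θ)
    have h1 := hlse.isLittleO
    have h2 := h1.comp_tendsto htendV
    have h3 : (fun θ' => (Vσ θ' - Vσ θ : S → ℝ)) =O[𝓝 θ] (fun θ' => θ' - θ) := by
      rw [isBigO_pi]
      intro s
      exact hOV s
    have h4 := h2.trans_isBigO h3
    refine h4.congr' ?_ (EventuallyEq.rfl)
    refine Eventually.of_forall fun θ' => ?_
    simp only [Function.comp]
    congr 1
    simp only [ContinuousLinearMap.coe_sum', Finset.sum_apply, ContinuousLinearMap.coe_smul',
      Pi.smul_apply, ContinuousLinearMap.proj_apply, Pi.sub_apply, smul_eq_mul]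
    rfl
  have hA1 : ∀ s, (fun θ' => (∑ a, (π θ' s a - π θ s a) * Qσ θ' s a) - ⟪g s, θ' - θ⟫)
      =o[𝓝 θ] (fun θ' => θ' - θ) := by
    intro s
    have hinner : ∀ h : EuclideanSpace ℝ (Fin N), ⟪g s, h⟫ = ∑ a, Qσ θ s a * ⟪D θ s a, h⟫ := by
      intro h
      rw [hgdef]
      rw [sum_inner]
      exact Finset.sum_congr rfl fun a _ => real_inner_smul_left _ _ _
    have heq : ∀ θ', (∑ a, (π θ' s a - π θ s a) * Qσ θ' s a) - ⟪g s, θ' - θ⟫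
        = (∑ a, Qσ θ s a * (π θ' s a - π θ s a - ⟪D θ s a, θ' - θ⟫))
          + ∑ a, (π θ' s a - π θ s a) * (Qσ θ' s a - Qσ θ s a) := by
      intro θ'
      rw [hinner, ← Finset.sum_add_distrib, ← Finset.sum_sub_distrib]
      exact Finset.sum_congr rfl fun a _ => by ring
    refine IsLittleO.congr_left ?_ (fun θ' => (heq θ').symm)
    refine IsLittleO.add ?_ ?_
    · exact IsLittleO.fun_sum fun a _ => (hoπ s a).const_mul_left _
    · exact IsLittleO.fun_sum fun a _ => bigO_mul_bigO_isLittleO (hOπ s a) (hOQ s a)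
  set ε : S → EuclideanSpace ℝ (Fin N) → ℝ := fun s θ' =>
    ((∑ a, (π θ' s a - π θ s a) * Qσ θ' s a) - ⟪g s, θ' - θ⟫)
    + γ * R * (lse σ (Vσ θ') - lse σ (Vσ θ) - ∑ s', w s' * (Vσ θ' s' - Vσ θ s')) with hεdef
  have hoε : ∀ s, (ε s) =o[𝓝 θ] (fun θ' => θ' - θ) := fun s =>
    (hA1 s).add (hA3.const_mul_left (γ * R))
  have hkey : ∀ᶠ θ' in 𝓝 θ, ∀ s,
      Vσ θ' s - Vσ θ s - ⟪G s, θ' - θ⟫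
      = β * (∑ s', P s s' * (Vσ θ' s' - Vσ θ s' - ⟪G s', θ' - θ⟫))
        + γ * R * (∑ s', w s' * (Vσ θ' s' - Vσ θ s' - ⟪G s', θ' - θ⟫))
        + ε s θ' := by
    filter_upwards [hθΘ] with θ' hθ'
    intro s
    have hΔV : Vσ θ' s - Vσ θ s
        = (∑ a, (π θ' s a - π θ s a) * Qσ θ' s a)
          + β * (∑ s', P s s' * (Vσ θ' s' - Vσ θ s'))
          + γ * R * (lse σ (Vσ θ') - lse σ (Vσ θ)) := by
      have h1 : Vσ θ' s - Vσ θ s = (∑ a, (π θ' s a - π θ s a) * Qσ θ' s a)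
          + ∑ a, π θ s a * (Qσ θ' s a - Qσ θ s a) := by
        rw [hVQ θ' hθ' s, hVQ θ hθ s, ← Finset.sum_add_distrib, ← Finset.sum_sub_distrib]
        exact Finset.sum_congr rfl fun a _ => by ring
      have hq : ∀ a, Qσ θ' s a - Qσ θ s a
          = β * (∑ s', p s a s' * (Vσ θ' s' - Vσ θ s'))
            + γ * R * (lse σ (Vσ θ') - lse σ (Vσ θ)) := by
        intro a
        rw [hQσ θ' hθ' s a, hQσ θ hθ s a]
        have hps : ∑ s', p s a s' * (Vσ θ' s' - Vσ θ s')
            = (∑ s', p s a s' * Vσ θ' s') - ∑ s', p s a s' * Vσ θ s' := by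
          rw [← Finset.sum_sub_distrib]
          exact Finset.sum_congr rfl fun s' _ => by ring
        rw [hps]; ring
      have hswap : ∑ a, π θ s a * ∑ s', p s a s' * (Vσ θ' s' - Vσ θ s')
          = ∑ s', P s s' * (Vσ θ' s' - Vσ θ s') := by
        calc ∑ a, π θ s a * ∑ s', p s a s' * (Vσ θ' s' - Vσ θ s')
            = ∑ a, ∑ s', π θ s a * (p s a s' * (Vσ θ' s' - Vσ θ s')) :=
              Finset.sum_congr rfl fun a _ => Finset.mul_sum _ _ _
          _ = ∑ s', ∑ a, π θ s a * (p s a s' * (Vσ θ' s' - Vσ θ s')) := Finset.sum_comm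
          _ = ∑ s', P s s' * (Vσ θ' s' - Vσ θ s') := by
              refine Finset.sum_congr rfl fun s' _ => ?_
              rw [hPapp s s', Finset.sum_mul]
              exact Finset.sum_congr rfl fun a _ => by ring
      have h2 : ∑ a, π θ s a * (Qσ θ' s a - Qσ θ s a)
          = β * (∑ s', P s s' * (Vσ θ' s' - Vσ θ s'))
            + γ * R * (lse σ (Vσ θ') - lse σ (Vσ θ)) := by
        calc ∑ a, π θ s a * (Qσ θ' s a - Qσ θ s a)
            = ∑ a, (β * (π θ s a * ∑ s', p s a s' * (Vσ θ' s' - Vσ θ s'))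
                + γ * R * (lse σ (Vσ θ') - lse σ (Vσ θ)) * π θ s a) := by
              refine Finset.sum_congr rfl fun a _ => ?_
              rw [hq a]; ring
          _ = β * (∑ a, π θ s a * ∑ s', p s a s' * (Vσ θ' s' - Vσ θ s'))
              + γ * R * (lse σ (Vσ θ') - lse σ (Vσ θ)) * ∑ a, π θ s a := by
              rw [Finset.sum_add_distrib, ← Finset.mul_sum, ← Finset.mul_sum]
          _ = _ := by rw [hswap, (hπ θ hθ s).2, mul_one]
      rw [h1, h2]; ring
    have hGin : ⟪G s, θ' - θ⟫ = ⟪g s, θ' - θ⟫ + β * (∑ s', P s s' * ⟪G s', θ' - θ⟫)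
        + γ * R * (∑ s', w s' * ⟪G s', θ' - θ⟫) := by
      nth_rewrite 1 [hGlin s]
      simp only [inner_add_left, sum_inner, real_inner_smul_left]
    have hsplit1 : ∑ s', P s s' * (Vσ θ' s' - Vσ θ s' - ⟪G s', θ' - θ⟫)
        = (∑ s', P s s' * (Vσ θ' s' - Vσ θ s')) - ∑ s', P s s' * ⟪G s', θ' - θ⟫ := by
      rw [← Finset.sum_sub_distrib]
      exact Finset.sum_congr rfl fun s' _ => by ring
    have hsplit2 : ∑ s', w s' * (Vσ θ' s' - Vσ θ s' - ⟪G s', θ' - θ⟫)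
        = (∑ s', w s' * (Vσ θ' s' - Vσ θ s')) - ∑ s', w s' * ⟪G s', θ' - θ⟫ := by
      rw [← Finset.sum_sub_distrib]
      exact Finset.sum_congr rfl fun s' _ => by ring
    simp only [hεdef]
    rw [hsplit1, hsplit2, hΔV, hGin]
    ring
  set Ftot : EuclideanSpace ℝ (Fin N) → ℝ := fun θ' => ∑ s, |ε s θ'| with hFdef
  have hoF : Ftot =o[𝓝 θ] (fun θ' => θ' - θ) := by
    refine IsLittleO.fun_sum fun s _ => ?_
    have := isLittleO_norm_left.2 (hoε s)
    simpa [Real.norm_eq_abs] using this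
  have hF0 : ∀ θ', 0 ≤ Ftot θ' := fun θ' => Finset.sum_nonneg fun s _ => abs_nonneg _
  have hFs : ∀ θ' s, |ε s θ'| ≤ Ftot θ' := fun θ' s =>
    Finset.single_le_sum (f := fun s => |ε s θ'|) (fun s _ => abs_nonneg _) (Finset.mem_univ s)
  have heVb : ∀ᶠ θ' in 𝓝 θ, ∀ s,
      |Vσ θ' s - Vσ θ s - ⟪G s, θ' - θ⟫| ≤ (1 / (1 - γ)) * Ftot θ' := by
    filter_upwards [hkey] with θ' hk
    set M : ℝ := (univ : Finset S).sup' univ_nonempty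
        (fun s => |Vσ θ' s - Vσ θ s - ⟪G s, θ' - θ⟫|) with hMdef
    have hMle : ∀ s, |Vσ θ' s - Vσ θ s - ⟪G s, θ' - θ⟫| ≤ M := fun s =>
      Finset.le_sup' (fun s => |Vσ θ' s - Vσ θ s - ⟪G s, θ' - θ⟫|) (mem_univ s)
    have hstep : ∀ s, |Vσ θ' s - Vσ θ s - ⟪G s, θ' - θ⟫| ≤ γ * M + Ftot θ' := by
      intro s
      rw [hk s]
      have hb1 : |∑ s', P s s' * (Vσ θ' s' - Vσ θ s' - ⟪G s', θ' - θ⟫)| ≤ M := by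
        calc |∑ s', P s s' * (Vσ θ' s' - Vσ θ s' - ⟪G s', θ' - θ⟫)|
            ≤ ∑ s', |P s s' * (Vσ θ' s' - Vσ θ s' - ⟪G s', θ' - θ⟫)| :=
              Finset.abs_sum_le_sum_abs _ _
          _ = ∑ s', P s s' * |Vσ θ' s' - Vσ θ s' - ⟪G s', θ' - θ⟫| := by
              refine Finset.sum_congr rfl fun s' _ => ?_
              rw [abs_mul, abs_of_nonneg (hP0 s s')]
          _ ≤ ∑ s', P s s' * M := Finset.sum_le_sum fun s' _ =>
              mul_le_mul_of_nonneg_left (hMle s') (hP0 s s')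
          _ = M := by rw [← Finset.sum_mul, hProw s, one_mul]
      have hb2 : |∑ s', w s' * (Vσ θ' s' - Vσ θ s' - ⟪G s', θ' - θ⟫)| ≤ M := by
        calc |∑ s', w s' * (Vσ θ' s' - Vσ θ s' - ⟪G s', θ' - θ⟫)|
            ≤ ∑ s', |w s' * (Vσ θ' s' - Vσ θ s' - ⟪G s', θ' - θ⟫)| :=
              Finset.abs_sum_le_sum_abs _ _
          _ = ∑ s', w s' * |Vσ θ' s' - Vσ θ s' - ⟪G s', θ' - θ⟫| := by
              refine Finset.sum_congr rfl fun s' _ => ?_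
              rw [abs_mul, abs_of_nonneg (hw0 s')]
          _ ≤ ∑ s', w s' * M := Finset.sum_le_sum fun s' _ =>
              mul_le_mul_of_nonneg_left (hMle s') (hw0 s')
          _ = M := by rw [← Finset.sum_mul, hwsum, one_mul]
      have hM0 : 0 ≤ M := le_trans (abs_nonneg _) (hMle (Classical.arbitrary S))
      calc |β * (∑ s', P s s' * (Vσ θ' s' - Vσ θ s' - ⟪G s', θ' - θ⟫))
            + γ * R * (∑ s', w s' * (Vσ θ' s' - Vσ θ s' - ⟪G s', θ' - θ⟫)) + ε s θ'|
          ≤ |β * (∑ s', P s s' * (Vσ θ' s' - Vσ θ s' - ⟪G s', θ' - θ⟫))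
            + γ * R * (∑ s', w s' * (Vσ θ' s' - Vσ θ s' - ⟪G s', θ' - θ⟫))| + |ε s θ'| :=
            abs_add_le _ _
        _ ≤ (|β * (∑ s', P s s' * (Vσ θ' s' - Vσ θ s' - ⟪G s', θ' - θ⟫))|
            + |γ * R * (∑ s', w s' * (Vσ θ' s' - Vσ θ s' - ⟪G s', θ' - θ⟫))|) + |ε s θ'| :=
            add_le_add_left (abs_add_le _ _) _
        _ ≤ (β * M + γ * R * M) + Ftot θ' := by
            have hc1 : |β * (∑ s', P s s' * (Vσ θ' s' - Vσ θ s' - ⟪G s', θ' - θ⟫))| ≤ β * M := by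
              rw [abs_mul, abs_of_nonneg hβ0]
              exact mul_le_mul_of_nonneg_left hb1 hβ0
            have hc2 : |γ * R * (∑ s', w s' * (Vσ θ' s' - Vσ θ s' - ⟪G s', θ' - θ⟫))|
                ≤ γ * R * M := by
              rw [abs_mul, abs_of_nonneg (mul_nonneg hγ0 hR0)]
              exact mul_le_mul_of_nonneg_left hb2 (mul_nonneg hγ0 hR0)
            exact add_le_add (add_le_add hc1 hc2) (hFs θ' s)
        _ = γ * M + Ftot θ' := by rw [hβdef]; ring
    have hM2 : M ≤ (1 / (1 - γ)) * Ftot θ' := by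
      obtain ⟨s0, _, hs0⟩ := Finset.exists_mem_eq_sup' (univ_nonempty (α := S))
        (fun s => |Vσ θ' s - Vσ θ s - ⟪G s, θ' - θ⟫|)
      have h := hstep s0
      rw [← hs0] at h
      rw [one_div_mul_eq_div, le_div_iff₀ h1γ]
      nlinarith [h]
    intro s
    exact le_trans (hMle s) hM2
  have hoeV : ∀ s, (fun θ' => Vσ θ' s - Vσ θ s - ⟪G s, θ' - θ⟫)
      =o[𝓝 θ] (fun θ' => θ' - θ) := by
    intro s
    refine IsBigO.trans_isLittleO ?_ hoF
    rw [isBigO_iff]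
    refine ⟨1 / (1 - γ), ?_⟩
    filter_upwards [heVb] with θ' h
    rw [Real.norm_eq_abs, Real.norm_eq_abs, abs_of_nonneg (hF0 θ')]
    exact h s
  have hgrad : ∀ s, HasGradientAt (fun θ' => Vσ θ' s) (G s) θ := by
    intro s
    rw [hasGradientAt_iff_hasFDerivAt]
    have h' : (fun θ' => Vσ θ' s - Vσ θ s
        - (InnerProductSpace.toDual ℝ (EuclideanSpace ℝ (Fin N)) (G s)) (θ' - θ))
        =o[𝓝 θ] (fun θ' => θ' - θ) := by
      simpa [InnerProductSpace.toDual_apply_apply] using hoeV s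
    exact HasFDerivAt.of_isLittleO h'
  have hvec : (∑ s, ρ s • B s θ) + κ • W = ∑ s, ρ s • G s := by
    simp only [hGdef]
    simp only [smul_add]
    rw [Finset.sum_add_distrib]
    congr 1
    rw [← Finset.sum_smul, hρ.2, one_smul]
  rw [hasGradientAt_iff_hasFDerivAt]
  have hfin : HasFDerivAt (fun θ' => ∑ s, ρ s * Vσ θ' s)
      (∑ s, ρ s • (InnerProductSpace.toDual ℝ (EuclideanSpace ℝ (Fin N)) (G s))) θ := by
    refine HasFDerivAt.fun_sum fun s _ => ?_
    exact (hasGradientAt_iff_hasFDerivAt.1 (hgrad s)).const_mul (ρ s)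
  have htd : InnerProductSpace.toDual ℝ (EuclideanSpace ℝ (Fin N)) ((∑ s, ρ s • B s θ) + κ • W)
      = ∑ s, ρ s • (InnerProductSpace.toDual ℝ (EuclideanSpace ℝ (Fin N)) (G s)) := by
    rw [hvec, map_sum]
    exact Finset.sum_congr rfl fun s _ => by simp
  rw [htd]
  exact hfin
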